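/- arXiv:2001.07383 — 7 statements merged into one kernel-verified Lean document; each statement's English description precedes it below -/
import Mathlib

section
/- Let q ≥ 1 be an integer and α ∈ ℝ with α ≠ 1. Then the system of linear equations ∑_{j=1}^{q} K(j) = (1−α)/2, ∑_{j=1}^{q} j² K(j) = 0, ∑_{j=1}^{q} j⁴ K(j) = 0, …, ∑_{j=1}^{q} j^{2(q−1)} K(j) = 0 in the unknowns K(1), …, K(q) ∈ ℝ has the unique solution K(j) = ((1−α)/2) · (q!/j)² · 1/∏_{l=1, l≠j}^{q} (l² − j²) for j = 1, …, q. -/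
open Finset

open Polynomial

/-- For `q ≥ 1` and `α ≠ 1`, the linear system
`∑_{j=1}^q K j = (1−α)/2`, `∑_{j=1}^q j^(2r) K j = 0` for `r = 1, …, q−1`,
has the unique solution
`K j = ((1−α)/2) (q!/j)² / ∏_{l≠j} (l² − j²)` for `j = 1, …, q`. -/
theorem statement2 (q : ℕ) (hq : 1 ≤ q) (α : ℝ) (hα : α ≠ 1) (K : ℕ → ℝ) :
    ((∑ j ∈ Finset.Icc 1 q, K j) = (1 - α) / 2 ∧
      (∀ r : ℕ, 1 ≤ r → r ≤ q - 1 →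
        (∑ j ∈ Finset.Icc 1 q, (j : ℝ) ^ (2 * r) * K j) = 0))
    ↔
    (∀ j ∈ Finset.Icc 1 q,
      K j = ((1 - α) / 2) * ((q.factorial : ℝ) / j) ^ 2 *
        (∏ l ∈ (Finset.Icc 1 q).erase j, ((l : ℝ) ^ 2 - (j : ℝ) ^ 2))⁻¹) := by
  classical
  set s : Finset ℕ := Finset.Icc 1 q with hs
  set v : ℕ → ℝ := fun n => (n : ℝ) ^ 2 with hv
  set c : ℝ := (1 - α) / 2 with hc
  have hinj : Set.InjOn v (s : Set ℕ) := by
    intro a _ b _ hab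
    simp only [hv] at hab
    have h : a ^ 2 = b ^ 2 := by exact_mod_cast hab
    exact Nat.pow_left_injective two_ne_zero h
  have hcard : s.card = q := by simp [hs]
  have hne : s.Nonempty := ⟨1, by simp [hs, hq]⟩
  have key : ∀ j ∈ s, c * Polynomial.eval 0 (Lagrange.basis s v j)
      = c * ((q.factorial : ℝ) / j) ^ 2 *
        (∏ l ∈ s.erase j, ((l : ℝ) ^ 2 - (j : ℝ) ^ 2))⁻¹ := by
    intro j hj
    have hj1 : 1 ≤ j := (Finset.mem_Icc.mp (hs ▸ hj)).1
    have hj0 : (j : ℝ) ≠ 0 := Nat.cast_ne_zero.mpr (by omega)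
    have heval : Polynomial.eval 0 (Lagrange.basis s v j)
        = (∏ l ∈ s.erase j, (l : ℝ) ^ 2) *
          (∏ l ∈ s.erase j, ((l : ℝ) ^ 2 - (j : ℝ) ^ 2))⁻¹ := by
      rw [Lagrange.basis, Polynomial.eval_prod, ← Finset.prod_inv_distrib,
        ← Finset.prod_mul_distrib]
      refine Finset.prod_congr rfl fun l hl => ?_
      simp only [Lagrange.basisDivisor, hv, eval_mul, eval_C, eval_sub, eval_X]
      rw [show ((j : ℝ) ^ 2 - (l : ℝ) ^ 2 : ℝ) = -((l : ℝ) ^ 2 - (j : ℝ) ^ 2) by ring, inv_neg]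
      ring
    have hprod : (∏ l ∈ s.erase j, (l : ℝ) ^ 2) = ((q.factorial : ℝ) / j) ^ 2 := by
      have h1 : (∏ l ∈ s, (l : ℝ)) = q.factorial := by
        rw [hs, ← Nat.cast_prod, ← Finset.Ico_add_one_right_eq_Icc, Finset.prod_Ico_id_eq_factorial]
      have h2 : (j : ℝ) * ∏ l ∈ s.erase j, (l : ℝ) = q.factorial := by
        rw [Finset.mul_prod_erase s _ hj, h1]
      have h3 : (∏ l ∈ s.erase j, (l : ℝ)) = (q.factorial : ℝ) / j := by
        field_simp
        linarith [h2]
      rw [Finset.prod_pow, h3]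
    rw [heval, hprod]; ring
  constructor
  · rintro ⟨h1, h2⟩ j0 hj0
    set L : Polynomial ℝ := Lagrange.basis s v j0 with hL
    have hdeg : L.natDegree < q := by
      rw [hL, Lagrange.natDegree_basis hinj hj0, hcard]; omega
    have step1 : K j0 = ∑ j ∈ s, Polynomial.eval (v j) L * K j := by
      rw [Finset.sum_eq_single_of_mem j0 hj0 (fun b hb hbne => by
        rw [Lagrange.eval_basis_of_ne hbne.symm hb, zero_mul])]
      rw [hL, Lagrange.eval_basis_self hinj hj0, one_mul]
    have step2 : ∀ j ∈ s, Polynomial.eval (v j) L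
        = ∑ r ∈ Finset.range q, L.coeff r * v j ^ r := fun j _ =>
      Polynomial.eval_eq_sum_range' hdeg (v j)
    have hsums : ∀ r ∈ Finset.range q, (∑ j ∈ s, v j ^ r * K j) = if r = 0 then c else 0 := by
      intro r hr
      by_cases h0 : r = 0
      · simp [h0, h1]
      · rw [if_neg h0]
        have hr2 : r ≤ q - 1 := by
          have := Finset.mem_range.mp hr; omega
        have := h2 r (Nat.one_le_iff_ne_zero.mpr h0) hr2
        simpa [hv, pow_mul] using this
    have step3 : K j0 = ∑ r ∈ Finset.range q, L.coeff r * (∑ j ∈ s, v j ^ r * K j) := by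
      rw [step1, Finset.sum_congr rfl fun j hj => by rw [step2 j hj]]
      simp_rw [Finset.sum_mul, Finset.mul_sum]
      rw [Finset.sum_comm]
      exact Finset.sum_congr rfl fun r _ => Finset.sum_congr rfl fun j _ => by ring
    rw [step3, Finset.sum_congr rfl fun r hr => by rw [hsums r hr]]
    have h00 : (0 : ℕ) ∈ Finset.range q := Finset.mem_range.mpr hq
    rw [Finset.sum_eq_single_of_mem 0 h00 (fun b _ hb => by rw [if_neg hb, mul_zero])]
    rw [if_pos rfl, Polynomial.coeff_zero_eq_eval_zero]
    have := key j0 hj0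
    rw [← hL] at this
    rw [mul_comm, this]
  · intro hK
    have hK' : ∀ j ∈ s, K j = c * Polynomial.eval 0 (Lagrange.basis s v j) :=
      fun j hj => (hK j hj).trans (key j hj).symm
    constructor
    · calc (∑ j ∈ s, K j) = ∑ j ∈ s, c * Polynomial.eval 0 (Lagrange.basis s v j) :=
            Finset.sum_congr rfl hK'
        _ = c * Polynomial.eval 0 (∑ j ∈ s, Lagrange.basis s v j) := by
            rw [Polynomial.eval_finset_sum, Finset.mul_sum]
        _ = c := by rw [Lagrange.sum_basis hinj hne, Polynomial.eval_one, mul_one]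
    · intro r hr1 hr2
      have hinterp : (Polynomial.X : Polynomial ℝ) ^ r
          = Lagrange.interpolate s v (fun j => v j ^ r) := by
        apply Lagrange.eq_interpolate_of_eval_eq _ hinj
        · rw [Polynomial.degree_X_pow, hcard]
          exact_mod_cast (by omega : r < q)
        · intro i _; simp
      calc (∑ j ∈ s, (j : ℝ) ^ (2 * r) * K j)
          = ∑ j ∈ s, v j ^ r * (c * Polynomial.eval 0 (Lagrange.basis s v j)) := by
            refine Finset.sum_congr rfl fun j hj => ?_
            rw [hK' j hj, hv, pow_mul]
        _ = c * Polynomial.eval 0 (Lagrange.interpolate s v (fun j => v j ^ r)) := by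
            rw [Lagrange.interpolate_apply, Polynomial.eval_finset_sum, Finset.mul_sum]
            refine Finset.sum_congr rfl fun j hj => ?_
            rw [Polynomial.eval_mul, Polynomial.eval_C]; ring
        _ = 0 := by
            rw [← hinterp, Polynomial.eval_pow, Polynomial.eval_X, zero_pow (by omega), mul_zero]
end

section
/- For every integer q ≥ 1, the identity ∑_{j=1}^{q} (q!/j)² · 1/∏_{l=1, l≠j}^{q} (l² − j²) = 1 holds. -/
open Finset

private lemma prod_Icc_cast (n : ℕ) : ∏ l ∈ Icc 1 n, (l : ℝ) = n.factorial := by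
  rw [← Nat.cast_prod]
  norm_cast
  rw [← Finset.Ico_add_one_right_eq_Icc]
  exact Finset.prod_Ico_id_eq_factorial n

private lemma Icc_succ_insert (a b : ℕ) (h : a ≤ b + 1) :
    Icc a (b + 1) = insert (b + 1) (Icc a b) := by
  ext x
  simp only [Finset.mem_Icc, Finset.mem_insert]
  omega

-- ∏_{l=1}^{q} (l + j) = (q+j)!/j!
private lemma prod_add (j : ℕ) : ∀ q : ℕ,
    ∏ l ∈ Icc 1 q, ((l : ℝ) + j) = (q + j).factorial / j.factorial := by
  intro q
  induction q with
  | zero => simp [div_self (by positivity : (j.factorial : ℝ) ≠ 0)]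
  | succ q ih =>
    rw [Icc_succ_insert 1 q (by omega), Finset.prod_insert (by simp), ih]
    have h := Nat.factorial_pos j
    field_simp
    rw [show q + 1 + j = (q + j) + 1 by omega, Nat.factorial_succ]
    push_cast
    ring

-- ∏_{l=j+1}^{q} (l - j) = (q-j)!
private lemma prod_sub_high (j : ℕ) : ∀ q : ℕ, j ≤ q →
    ∏ l ∈ Icc (j + 1) q, ((l : ℝ) - j) = (q - j).factorial := by
  intro q
  induction q with
  | zero => intro h; interval_cases j; simp
  | succ q ih =>
    intro h
    rcases Nat.eq_or_lt_of_le h with h1 | h1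
    · subst h1; simp
    · have hjq : j ≤ q := by omega
      rw [Icc_succ_insert (j + 1) q (by omega), Finset.prod_insert (by simp), ih hjq]
      rw [show q + 1 - j = (q - j) + 1 by omega, Nat.factorial_succ]
      have hc : ((q - j : ℕ) : ℝ) = (q : ℝ) - j := by
        push_cast [hjq]; ring
      push_cast
      rw [hc]
      ring

-- ∏_{l=1}^{j-1} (l - j) = (-1)^(j-1) (j-1)!
private lemma prod_sub_low (j : ℕ) (hj : 1 ≤ j) :
    ∏ l ∈ Icc 1 (j - 1), ((l : ℝ) - j) = (-1) ^ (j - 1) * (j - 1).factorial := by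
  have step1 : ∏ l ∈ Icc 1 (j - 1), ((l : ℝ) - j)
      = ∏ l ∈ Icc 1 (j - 1), ((-1) * ((j - l : ℕ) : ℝ)) := by
    apply Finset.prod_congr rfl
    intro l hl
    simp only [Finset.mem_Icc] at hl
    have : ((j - l : ℕ) : ℝ) = (j : ℝ) - l := by
      push_cast [show l ≤ j by omega]; ring
    rw [this]; ring
  rw [step1, Finset.prod_mul_distrib, Finset.prod_const, Nat.card_Icc]
  simp only [Nat.add_sub_cancel]
  congr 1
  have step2 : ∏ l ∈ Icc 1 (j - 1), ((j - l : ℕ) : ℝ)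
      = ∏ m ∈ Icc 1 (j - 1), (m : ℝ) := by
    apply Finset.prod_bij' (fun l _ => j - l) (fun m _ => j - m)
    · intro a ha; simp only [Finset.mem_Icc] at *; omega
    · intro a ha; simp only [Finset.mem_Icc] at *; omega
    · intro a ha; simp only [Finset.mem_Icc] at ha; omega
    · intro a ha; simp only [Finset.mem_Icc] at ha; omega
    · intro a ha; rfl
  rw [step2, prod_Icc_cast]

-- 2 * ∑_{j=1}^q (-1)^j C(2q, q+j) = -C(2q, q)
private lemma key_int (q : ℕ) (hq : 1 ≤ q) :
    2 * ∑ j ∈ Icc 1 q, (-1 : ℤ) ^ j * ((2 * q).choose (q + j) : ℤ)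
      = -((2 * q).choose q : ℤ) := by
  have halt : ∑ i ∈ range (2 * q + 1), (-1 : ℤ) ^ i * ((2 * q).choose i : ℤ) = 0 := by
    rw [Int.alternating_sum_range_choose]
    simp only [if_neg (by omega : ¬ 2 * q = 0)]
  -- split range (2q+1) = range q ∪ Icc q (2q)
  have hsplit : range (2 * q + 1) = range q ∪ Icc q (2 * q) := by
    ext x; simp only [mem_range, mem_union, mem_Icc]; omega
  have hdisj : Disjoint (range q) (Icc q (2 * q)) := by
    rw [Finset.disjoint_left]; intro x hx hx'
    simp only [mem_range, mem_Icc] at *; omega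
  rw [hsplit, Finset.sum_union hdisj] at halt
  have hins : Icc q (2 * q) = insert q (Icc (q + 1) (2 * q)) := by
    ext x; simp only [mem_Icc, mem_insert]; omega
  rw [hins, Finset.sum_insert (by simp)] at halt
  -- A = ∑_{i ∈ range q} = ∑_{j ∈ Icc 1 q} (-1)^(q+j) C(2q, q+j)
  have hA : ∑ i ∈ range q, (-1 : ℤ) ^ i * ((2 * q).choose i : ℤ)
      = ∑ j ∈ Icc 1 q, (-1 : ℤ) ^ (q + j) * ((2 * q).choose (q + j) : ℤ) := by
    apply Finset.sum_bij' (fun i _ => q - i) (fun j _ => q - j)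
    · intro a ha; simp only [mem_range, mem_Icc] at *; omega
    · intro a ha; simp only [mem_range, mem_Icc] at *; omega
    · intro a ha; simp only [mem_range] at ha; omega
    · intro a ha; simp only [mem_Icc] at ha; omega
    · intro a ha
      simp only [mem_range] at ha
      have h1 : q + (q - a) = 2 * q - a := by omega
      have h2 : (2 * q).choose (2 * q - a) = (2 * q).choose a :=
        Nat.choose_symm (by omega)
      rw [h1, h2]
      congr 1
      rw [show 2 * q - a = a + 2 * (q - a) by omega, pow_add, pow_mul]
      simp
  -- B = ∑_{i ∈ Icc (q+1) (2q)} = same sum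
  have hB : ∑ i ∈ Icc (q + 1) (2 * q), (-1 : ℤ) ^ i * ((2 * q).choose i : ℤ)
      = ∑ j ∈ Icc 1 q, (-1 : ℤ) ^ (q + j) * ((2 * q).choose (q + j) : ℤ) := by
    apply Finset.sum_bij' (fun i _ => i - q) (fun j _ => j + q)
    · intro a ha; simp only [mem_Icc] at *; omega
    · intro a ha; simp only [mem_Icc] at *; omega
    · intro a ha; simp only [mem_Icc] at ha; omega
    · intro a ha; simp only [mem_Icc] at ha; omega
    · intro a ha
      simp only [mem_Icc] at ha
      rw [show q + (a - q) = a by omega]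
  rw [hA, hB] at halt
  -- halt : S + ((-1)^q * C + S) = 0 where S = ∑ (-1)^(q+j) C(2q,q+j)
  have hsgn : ∑ j ∈ Icc 1 q, (-1 : ℤ) ^ (q + j) * ((2 * q).choose (q + j) : ℤ)
      = (-1) ^ q * ∑ j ∈ Icc 1 q, (-1 : ℤ) ^ j * ((2 * q).choose (q + j) : ℤ) := by
    rw [Finset.mul_sum]
    apply Finset.sum_congr rfl
    intro j _
    rw [pow_add]; ring
  rw [hsgn] at halt
  have hq2 : ((-1 : ℤ) ^ q) ^ 2 = 1 := by
    rw [← pow_mul, mul_comm, pow_mul]; simp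
  have := congrArg (fun x => (-1 : ℤ) ^ q * x) halt
  simp only [mul_zero] at this
  nlinarith [this, hq2, sq_nonneg ((-1:ℤ)^q)]

/-- For every integer `q ≥ 1`,
`∑_{j=1}^q (q!/j)² · 1/∏_{l=1, l≠j}^q (l² − j²) = 1`. -/
theorem statement3 (q : ℕ) (hq : 1 ≤ q) :
    (∑ j ∈ Finset.Icc 1 q, ((q.factorial : ℝ) / j) ^ 2 *
      (∏ l ∈ (Finset.Icc 1 q).erase j, ((l : ℝ) ^ 2 - (j : ℝ) ^ 2))⁻¹) = 1 := by
  have hterm : ∀ j ∈ Finset.Icc 1 q,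
      ((q.factorial : ℝ) / j) ^ 2 *
        (∏ l ∈ (Finset.Icc 1 q).erase j, ((l : ℝ) ^ 2 - (j : ℝ) ^ 2))⁻¹
      = (-1 : ℝ) ^ (j - 1) * 2 * ((2 * q).choose (q + j) : ℝ) *
          ((q.factorial : ℝ) ^ 2 / ((2 * q).factorial : ℝ)) := by
    intro j hj
    simp only [Finset.mem_Icc] at hj
    obtain ⟨hj1, hjq⟩ := hj
    have hjmem : j ∈ Finset.Icc 1 q := by simp only [Finset.mem_Icc]; omega
    -- compute the product
    have hfac : ∀ l ∈ (Finset.Icc 1 q).erase j,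
        (l : ℝ) ^ 2 - (j : ℝ) ^ 2 = ((l : ℝ) - j) * ((l : ℝ) + j) := by
      intro l _; ring
    have hplus : ((j : ℝ) + j) * ∏ l ∈ (Finset.Icc 1 q).erase j, ((l : ℝ) + j)
        = (q + j).factorial / j.factorial := by
      have h := Finset.mul_prod_erase (Finset.Icc 1 q) (fun l => (l : ℝ) + j) hjmem
      rw [h, prod_add]
    have hset : (Finset.Icc 1 q).erase j = Icc 1 (j - 1) ∪ Icc (j + 1) q := by
      ext x
      simp only [Finset.mem_erase, Finset.mem_Icc, Finset.mem_union]
      omega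
    have hdisj : Disjoint (Icc 1 (j - 1)) (Icc (j + 1) q) := by
      rw [Finset.disjoint_left]
      intro x hx hx'
      simp only [Finset.mem_Icc] at *
      omega
    have hminus : ∏ l ∈ (Finset.Icc 1 q).erase j, ((l : ℝ) - j)
        = (-1) ^ (j - 1) * (j - 1).factorial * (q - j).factorial := by
      rw [hset, Finset.prod_union hdisj, prod_sub_low j hj1, prod_sub_high j q hjq]
    have hj0 : (j : ℝ) ≠ 0 := by positivity
    have hjj : ((j : ℝ) + j) ≠ 0 := by positivity
    have hprod : ∏ l ∈ (Finset.Icc 1 q).erase j, ((l : ℝ) ^ 2 - (j : ℝ) ^ 2)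
        = ((-1) ^ (j - 1) * (j - 1).factorial * (q - j).factorial) *
          (((q + j).factorial / j.factorial) / ((j : ℝ) + j)) := by
      rw [Finset.prod_congr rfl hfac, Finset.prod_mul_distrib, hminus]
      congr 1
      rw [eq_div_iff hjj]
      linarith [hplus]
    rw [hprod]
    have hch : (((2 * q).choose (q + j) : ℝ)) * ((q + j).factorial : ℝ) *
        ((q - j).factorial : ℝ) = ((2 * q).factorial : ℝ) := by
      have h := Nat.choose_mul_factorial_mul_factorial
        (show q + j ≤ 2 * q by omega)
      rw [show 2 * q - (q + j) = q - j by omega] at h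
      exact_mod_cast h
    have hjf : (j.factorial : ℝ) = j * (j - 1).factorial := by
      obtain ⟨m, rfl⟩ : ∃ m, j = m + 1 := ⟨j - 1, by omega⟩
      simp only [Nat.factorial_succ, Nat.add_sub_cancel]
      push_cast
      ring
    have hs : ((-1 : ℝ) ^ ((j - 1) * 2)) = 1 := by
      rw [pow_mul']
      norm_num
    have hS0 : ((-1 : ℝ) ^ (j - 1)) ≠ 0 := pow_ne_zero (j - 1) (neg_ne_zero.mpr (one_ne_zero : (1 : ℝ) ≠ 0))
    have hA : ((j - 1).factorial : ℝ) ≠ 0 := by positivity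
    have hB : ((q - j).factorial : ℝ) ≠ 0 := by positivity
    have hC : ((q + j).factorial : ℝ) ≠ 0 := by positivity
    have hD : (j.factorial : ℝ) ≠ 0 := by positivity
    have hE : ((2 * q).factorial : ℝ) ≠ 0 := by positivity
    rw [← hch, hjf]
    have hch0 : (((2 * q).choose (q + j) : ℕ) : ℝ) ≠ 0 :=
      Nat.cast_ne_zero.mpr (Nat.choose_pos (by omega)).ne'
    field_simp
    linear_combination (-2 : ℝ) * hs
  rw [Finset.sum_congr rfl hterm, ← Finset.sum_mul]
  have hkey := key_int q hq
  have hsum : ∑ j ∈ Icc 1 q, (-1 : ℝ) ^ (j - 1) * 2 * ((2 * q).choose (q + j) : ℝ)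
      = ((2 * q).choose q : ℝ) := by
    have hcast : ∑ j ∈ Icc 1 q, (-1 : ℝ) ^ j * ((2 * q).choose (q + j) : ℝ)
        = ((∑ j ∈ Icc 1 q, (-1 : ℤ) ^ j * ((2 * q).choose (q + j) : ℤ) : ℤ) : ℝ) := by
      push_cast
      rfl
    have h2 : ∑ j ∈ Icc 1 q, (-1 : ℝ) ^ (j - 1) * 2 * ((2 * q).choose (q + j) : ℝ)
        = -2 * ∑ j ∈ Icc 1 q, (-1 : ℝ) ^ j * ((2 * q).choose (q + j) : ℝ) := by
      rw [Finset.mul_sum]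
      apply Finset.sum_congr rfl
      intro j hj
      simp only [Finset.mem_Icc] at hj
      have : j = (j - 1) + 1 := by omega
      rw [this, Nat.add_sub_cancel, pow_succ]
      ring
    rw [h2, hcast]
    have : (2 : ℝ) * ((∑ j ∈ Icc 1 q, (-1 : ℤ) ^ j * ((2 * q).choose (q + j) : ℤ) : ℤ) : ℝ)
        = -((2 * q).choose q : ℝ) := by
      exact_mod_cast congrArg (fun x : ℤ => (x : ℝ)) hkey
    linarith
  rw [hsum]
  have hcq : ((2 * q).choose q : ℝ) * (q.factorial : ℝ) * (q.factorial : ℝ)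
      = ((2 * q).factorial : ℝ) := by
    have h := Nat.choose_mul_factorial_mul_factorial (show q ≤ 2 * q by omega)
    rw [show 2 * q - q = q by omega] at h
    exact_mod_cast h
  have hE : ((2 * q).factorial : ℝ) ≠ 0 := by positivity
  field_simp
  nlinarith [hcq]
end

section
/- For every integer q ≥ 2 and every integer r with 1 ≤ r ≤ q−1, the identity ∑_{j=1}^{q} j^{2r} · (q!/j)² · 1/∏_{l=1, l≠j}^{q} (l² − j²) = 0 holds. -/
open Finset Polynomial

lemma basisDivisor_leadingCoeff {F : Type*} [Field F] (x y : F) :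
    (Lagrange.basisDivisor x y).leadingCoeff = (x - y)⁻¹ := by
  rcases eq_or_ne x y with h | h
  · simp [h, Lagrange.basisDivisor_self]
  · rw [Lagrange.basisDivisor, leadingCoeff_mul, leadingCoeff_C,
      (monic_X_sub_C y).leadingCoeff, mul_one]

lemma basis_leadingCoeff {F : Type*} [Field F] {ι : Type*} [DecidableEq ι]
    (s : Finset ι) (v : ι → F) (i : ι) :
    (Lagrange.basis s v i).leadingCoeff = (∏ j ∈ s.erase i, (v i - v j))⁻¹ := by
  rw [Lagrange.basis, leadingCoeff_prod]
  simp_rw [basisDivisor_leadingCoeff]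
  rw [← Finset.prod_inv_distrib]

lemma key_lemma {F : Type*} [Field F] {ι : Type*} [DecidableEq ι]
    (s : Finset ι) (v : ι → F) (hvs : Set.InjOn v s) (f : F[X])
    (hdeg : f.degree < ((s.card - 1 : ℕ) : WithBot ℕ)) :
    ∑ i ∈ s, f.eval (v i) * (∏ j ∈ s.erase i, (v i - v j))⁻¹ = 0 := by
  have hcard : f.degree < (s.card : WithBot ℕ) := by
    refine hdeg.trans_le ?_
    rw [Nat.cast_withBot, Nat.cast_withBot]
    exact WithBot.coe_le_coe.mpr (Nat.sub_le _ _)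
  have h := Lagrange.eq_interpolate hvs hcard
  have hc := congrArg (fun p => Polynomial.coeff p (s.card - 1)) h
  simp only [Lagrange.interpolate_apply, Polynomial.finset_sum_coeff,
    Polynomial.coeff_C_mul] at hc
  have hf0 : f.coeff (s.card - 1) = 0 := Polynomial.coeff_eq_zero_of_degree_lt hdeg
  rw [hf0] at hc
  rw [← hc.symm]
  refine Finset.sum_congr rfl fun i hi => ?_
  congr 1
  rw [← basis_leadingCoeff s v i, Polynomial.leadingCoeff,
    Lagrange.natDegree_basis hvs hi]

/-- For every integer `q ≥ 2` and every `1 ≤ r ≤ q − 1`,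
`∑_{j=1}^q j^(2r) (q!/j)² · 1/∏_{l=1, l≠j}^q (l² − j²) = 0`. -/
theorem statement4 (q : ℕ) (hq : 2 ≤ q) (r : ℕ) (hr1 : 1 ≤ r) (hr2 : r ≤ q - 1) :
    (∑ j ∈ Finset.Icc 1 q, (j : ℝ) ^ (2 * r) * ((q.factorial : ℝ) / j) ^ 2 *
      (∏ l ∈ (Finset.Icc 1 q).erase j, ((l : ℝ) ^ 2 - (j : ℝ) ^ 2))⁻¹) = 0 := by
  set s : Finset ℕ := Finset.Icc 1 q with hs
  set v : ℕ → ℝ := fun n => (n : ℝ) ^ 2 with hv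
  have hvs : Set.InjOn v s := by
    intro a ha b hb hab
    simp only [hv] at hab
    have : (a : ℝ) = b := by
      have ha' : (0:ℝ) ≤ a := Nat.cast_nonneg a
      have hb' : (0:ℝ) ≤ b := Nat.cast_nonneg b
      nlinarith [sq_nonneg ((a:ℝ) - b), sq_nonneg ((a:ℝ) + b)]
    exact_mod_cast this
  have hcards : s.card = q := by simp [hs]
  set f : ℝ[X] := Polynomial.C ((q.factorial : ℝ)^2) * Polynomial.X ^ (r - 1) with hf
  have hdeg : f.degree < ((s.card - 1 : ℕ) : WithBot ℕ) := by
    rw [hcards]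
    calc f.degree ≤ ((r - 1 : ℕ) : WithBot ℕ) := Polynomial.degree_C_mul_X_pow_le _ _
      _ < ((q - 1 : ℕ) : WithBot ℕ) := by
          rw [Nat.cast_withBot, Nat.cast_withBot]
          exact WithBot.coe_lt_coe.mpr (by omega)
  have key := key_lemma s v hvs f hdeg
  have key2 : ∑ i ∈ s, f.eval (v i) * (∏ j ∈ s.erase i, (v j - v i))⁻¹ = 0 := by
    have : ∀ i ∈ s, f.eval (v i) * (∏ j ∈ s.erase i, (v j - v i))⁻¹
        = (-1 : ℝ) ^ (q - 1) * (f.eval (v i) * (∏ j ∈ s.erase i, (v i - v j))⁻¹) := by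
      intro i hi
      have hcarde : (s.erase i).card = q - 1 := by
        rw [Finset.card_erase_of_mem hi, hcards]
      have : ∏ j ∈ s.erase i, (v j - v i) = (-1 : ℝ) ^ (q - 1) * ∏ j ∈ s.erase i, (v i - v j) := by
        rw [← hcarde, ← Finset.prod_const (-1 : ℝ), ← Finset.prod_mul_distrib]
        exact Finset.prod_congr rfl fun j _ => by ring
      rw [this, mul_inv, ← inv_pow, inv_neg, inv_one]
      ring
    rw [Finset.sum_congr rfl this, ← Finset.mul_sum, key, mul_zero]
  rw [← key2]
  refine Finset.sum_congr rfl fun j hj => ?_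
  have hj1 : 1 ≤ j := (Finset.mem_Icc.mp hj).1
  have hjR : (j : ℝ) ≠ 0 := by positivity
  have heval : f.eval (v j) = (j : ℝ) ^ (2 * r) * ((q.factorial : ℝ) / j) ^ 2 := by
    simp only [hf, hv, Polynomial.eval_mul, Polynomial.eval_C, Polynomial.eval_pow,
      Polynomial.eval_X, div_pow]
    rw [← pow_mul]
    field_simp
    have h2 : 2 * (r - 1) + 2 = 2 * r := by omega
    rw [← pow_add, h2]
  rw [heval]
end

section
/- Let q ≥ 1 be an integer, α ∈ ℝ, and define K(0) = α, K(j) = K(−j) = ((1−α)/2) · (q!/j)² · 1/∏_{l=1, l≠j}^{q} (l² − j²) for j = 1, …, q. Then ∑_{j=−q}^{q} j^{2q} K(j) = (1−α) · (q!)² · (−1)^{q+1}; in particular, this sum is nonzero whenever α ≠ 1. -/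
open Finset Polynomial

lemma lag_basis_coeff {ι : Type*} [DecidableEq ι] (s : Finset ι) (v : ι → ℝ)
    (hv : Set.InjOn v s) {i : ι} (hi : i ∈ s) :
    (Lagrange.basis s v i).coeff (s.card - 1) = (∏ j ∈ s.erase i, (v i - v j))⁻¹ := by
  have hnd := Lagrange.natDegree_basis hv hi
  rw [← hnd, Polynomial.coeff_natDegree]
  rw [Lagrange.basis, Polynomial.leadingCoeff_prod, ← Finset.prod_inv_distrib]
  refine Finset.prod_congr rfl fun j hj => ?_
  have hne : v i ≠ v j := by
    rcases Finset.mem_erase.mp hj with ⟨hij, hjs⟩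
    exact fun h => hij (hv hjs hi h.symm)
  rw [Lagrange.basisDivisor, leadingCoeff_mul, leadingCoeff_C, leadingCoeff_X_sub_C, mul_one]

lemma lag_sum {ι : Type*} [DecidableEq ι] (s : Finset ι) (v : ι → ℝ)
    (hv : Set.InjOn v s) (hs : s.Nonempty) :
    ∑ i ∈ s, v i ^ (s.card - 1) * (∏ j ∈ s.erase i, (v i - v j))⁻¹ = 1 := by
  have hcard : 0 < s.card := hs.card_pos
  have hdeg : ((X : ℝ[X]) ^ (s.card - 1)).degree < s.card := by
    rw [degree_X_pow]
    exact_mod_cast Nat.sub_lt hcard one_pos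
  have heq := Lagrange.eq_interpolate (f := (X : ℝ[X]) ^ (s.card - 1)) hv hdeg
  have hc := congrArg (fun p => Polynomial.coeff p (s.card - 1)) heq
  simp only [coeff_X_pow, if_pos rfl, Lagrange.interpolate_apply,
    Polynomial.finset_sum_coeff, Polynomial.coeff_C_mul, eval_pow, eval_X] at hc
  simp only [if_true] at hc
  rw [show (1:ℝ) = ∑ x ∈ s, v x ^ (s.card - 1) * (Lagrange.basis s v x).coeff (s.card - 1) from hc]
  exact Finset.sum_congr rfl fun i hi => by rw [lag_basis_coeff s v hv hi]

/-- For `q ≥ 1`, `α ∈ ℝ`, `K 0 = α` and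
`K j = K (−j) = ((1−α)/2)(q!/j)²/∏_{l≠j}(l² − j²)` for `j = 1, …, q`, one has
`∑_{j=−q}^q j^(2q) K j = (1−α)(q!)²(−1)^(q+1)`, which is nonzero whenever `α ≠ 1`. -/
theorem statement5 (q : ℕ) (hq : 1 ≤ q) (α : ℝ) (K : ℤ → ℝ)
    (hK0 : K 0 = α)
    (hKsymm : ∀ j : ℤ, K (-j) = K j)
    (hKj : ∀ j : ℕ, 1 ≤ j → j ≤ q →
      K (j : ℤ) = ((1 - α) / 2) * ((q.factorial : ℝ) / j) ^ 2 *
        (∏ l ∈ (Finset.Icc 1 q).erase j, ((l : ℝ) ^ 2 - (j : ℝ) ^ 2))⁻¹) :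
    (∑ j ∈ Finset.Icc (-(q : ℤ)) (q : ℤ), (j : ℝ) ^ (2 * q) * K j)
      = (1 - α) * (q.factorial : ℝ) ^ 2 * (-1 : ℝ) ^ (q + 1) ∧
    (α ≠ 1 → (∑ j ∈ Finset.Icc (-(q : ℤ)) (q : ℤ), (j : ℝ) ^ (2 * q) * K j) ≠ 0) := by
  set g : ℤ → ℝ := fun j => (j : ℝ) ^ (2 * q) * K j with hg
  -- even function
  have hgsymm : ∀ j : ℤ, g (-j) = g j := by
    intro j
    simp only [hg, hKsymm j, Int.cast_neg, (even_two_mul q).neg_pow]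
  -- split the sum
  have hsplit : Finset.Icc (-(q : ℤ)) (q : ℤ)
      = Finset.Icc (-(q : ℤ)) (-1) ∪ Finset.Icc 0 (q : ℤ) := by
    ext x; simp only [mem_Icc, mem_union]; omega
  have hdisj : Disjoint (Finset.Icc (-(q : ℤ)) (-1)) (Finset.Icc 0 (q : ℤ)) := by
    rw [Finset.disjoint_left]; intro x hx hx'
    simp only [mem_Icc] at hx hx'; omega
  have hneg : ∑ j ∈ Finset.Icc (-(q : ℤ)) (-1), g j = ∑ j ∈ Finset.Icc 1 (q : ℤ), g j := by
    refine Finset.sum_nbij' (fun x => -x) (fun x => -x) ?_ ?_ ?_ ?_ ?_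
    · intro x hx; simp only [mem_Icc] at hx ⊢; omega
    · intro x hx; simp only [mem_Icc] at hx ⊢; omega
    · intro x _; ring
    · intro x _; ring
    · intro x _; simpa using (hgsymm x).symm
  have h0insert : Finset.Icc (0 : ℤ) (q : ℤ) = insert 0 (Finset.Icc 1 (q : ℤ)) := by
    ext x; simp only [mem_Icc, mem_insert]; omega
  have h0notmem : (0 : ℤ) ∉ Finset.Icc (1 : ℤ) (q : ℤ) := by simp
  have hg0 : g 0 = 0 := by
    simp only [hg, Int.cast_zero]
    rw [zero_pow (by omega : 2 * q ≠ 0), zero_mul]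
  -- transfer to ℕ
  have hnat : ∑ j ∈ Finset.Icc 1 (q : ℤ), g j = ∑ j ∈ Finset.Icc 1 q, g (j : ℤ) := by
    refine (Finset.sum_nbij' (fun x : ℕ => (x : ℤ)) (fun x : ℤ => x.toNat) ?_ ?_ ?_ ?_ ?_).symm
    · intro x hx; simp only [mem_Icc] at hx ⊢; omega
    · intro x hx; simp only [mem_Icc] at hx ⊢; omega
    · intro x _; simp
    · intro x hx; simp only [mem_Icc] at hx; show ((x.toNat : ℤ)) = x; omega
    · intro x _; rfl
  have hS : ∑ j ∈ Finset.Icc (-(q : ℤ)) (q : ℤ), g j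
      = 2 * ∑ j ∈ Finset.Icc 1 q, g (j : ℤ) := by
    rw [hsplit, Finset.sum_union hdisj, hneg, h0insert, Finset.sum_insert h0notmem, hg0,
      zero_add, hnat]; ring
  -- evaluate each term
  set v : ℕ → ℝ := fun n => (n : ℝ) ^ 2 with hv
  have hvinj : Set.InjOn v (Finset.Icc 1 q) := by
    intro a ha b hb hab
    simp only [hv] at hab
    have : ((a ^ 2 : ℕ) : ℝ) = ((b ^ 2 : ℕ) : ℝ) := by push_cast; exact hab
    have h2 : a ^ 2 = b ^ 2 := Nat.cast_injective this
    exact Nat.pow_left_injective (by norm_num) h2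
  have hcard : (Finset.Icc 1 q).card = q := by rw [Nat.card_Icc]; omega
  have hterm : ∀ j ∈ Finset.Icc 1 q,
      g (j : ℤ) = ((1 - α) / 2) * (q.factorial : ℝ) ^ 2 * (-1 : ℝ) ^ (q + 1) *
        (v j ^ ((Finset.Icc 1 q).card - 1) *
          (∏ l ∈ (Finset.Icc 1 q).erase j, (v j - v l))⁻¹) := by
    intro j hj
    rw [mem_Icc] at hj
    have hj1 := hj.1
    have hjploc : (0 : ℝ) < (j : ℝ) := by exact_mod_cast hj1
    have hjne : (j : ℝ) ≠ 0 := ne_of_gt hjploc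
    have hKjval := hKj j hj.1 hj.2
    have hprodsign : ∏ l ∈ (Finset.Icc 1 q).erase j, ((l : ℝ) ^ 2 - (j : ℝ) ^ 2)
        = (-1 : ℝ) ^ (q - 1) * ∏ l ∈ (Finset.Icc 1 q).erase j, (v j - v l) := by
      have : ∀ l ∈ (Finset.Icc 1 q).erase j,
          ((l : ℝ) ^ 2 - (j : ℝ) ^ 2) = -(v j - v l) := by
        intro l _; simp only [hv]; ring
      rw [Finset.prod_congr rfl this]
      rw [show ∀ t : Finset ℕ, ∀ h : ℕ → ℝ, (∏ x ∈ t, -(h x)) = (-1:ℝ)^t.card * ∏ x ∈ t, h x from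
        fun t h => by rw [← Finset.prod_const, ← Finset.prod_mul_distrib]; simp [neg_one_mul]]
      rw [Finset.card_erase_of_mem (by rw [mem_Icc]; omega), hcard]
    simp only [hg, Int.cast_natCast]
    rw [hKjval, hprodsign, mul_inv, hcard]
    rw [show ((-1 : ℝ) ^ (q - 1))⁻¹ = (-1 : ℝ) ^ (q - 1) by
      rcases Nat.even_or_odd (q - 1) with h | h
      · rw [h.neg_one_pow]; norm_num
      · rw [h.neg_one_pow]; norm_num]
    rw [show (-1 : ℝ) ^ (q + 1) = (-1 : ℝ) ^ (q - 1) by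
      rw [show q + 1 = (q - 1) + 2 by omega, pow_add]; norm_num]
    have hpow : (j : ℝ) ^ (2 * q) = (j : ℝ) ^ 2 * v j ^ (q - 1) := by
      simp only [hv, ← pow_mul]
      rw [← pow_add]
      congr 1; omega
    rw [hpow, div_pow, div_eq_mul_inv]
    have key : (j:ℝ)^2 * ((j:ℝ)^2)⁻¹ = 1 := mul_inv_cancel₀ (pow_ne_zero 2 hjne)
    linear_combination ((1-α)/2 * (q.factorial:ℝ)^2 * (-1:ℝ)^(q-1) *
      (v j ^ (q-1) * (∏ l ∈ (Finset.Icc 1 q).erase j, (v j - v l))⁻¹)) * key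
  have hlag := lag_sum (Finset.Icc 1 q) v hvinj ⟨1, by rw [mem_Icc]; omega⟩
  have hmain : ∑ j ∈ Finset.Icc (-(q : ℤ)) (q : ℤ), g j
      = (1 - α) * (q.factorial : ℝ) ^ 2 * (-1 : ℝ) ^ (q + 1) := by
    rw [hS, Finset.sum_congr rfl hterm, ← Finset.mul_sum, hlag, mul_one]
    ring
  refine ⟨hmain, fun hα => ?_⟩
  rw [hmain]
  have h1 : (1 : ℝ) - α ≠ 0 := sub_ne_zero_of_ne (fun h => hα h.symm)
  have h2 : (q.factorial : ℝ) ^ 2 ≠ 0 := pow_ne_zero _ (Nat.cast_ne_zero.mpr q.factorial_ne_zero)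
  have h3 : (-1 : ℝ) ^ (q + 1) ≠ 0 := pow_ne_zero _ (by norm_num)
  exact mul_ne_zero (mul_ne_zero h1 h2) h3
end

section
/- For every integer q ≥ 1, the identity ∑_{k=1}^{q} 1/∏_{j=1, j≠k}^{q} (j²/k² − 1) = (−1)^{q+1} holds. -/
open Finset Polynomial

lemma aux_leadingCoeff_basis {F : Type*} [Field F] {ι : Type*} [DecidableEq ι]
    (s : Finset ι) (v : ι → F) (i : ι) :
    (Lagrange.basis s v i).leadingCoeff = Lagrange.nodalWeight s v i := by
  unfold Lagrange.basis Lagrange.nodalWeight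
  rw [leadingCoeff_prod]
  refine Finset.prod_congr rfl fun j _ => ?_
  unfold Lagrange.basisDivisor
  rw [leadingCoeff_mul, leadingCoeff_C, (monic_X_sub_C (v j)).leadingCoeff, mul_one]

lemma aux_sum_nodalWeight_pow {F : Type*} [Field F] {ι : Type*} [DecidableEq ι]
    (s : Finset ι) (v : ι → F) (hvs : Set.InjOn v s) (hs : s.Nonempty) :
    ∑ i ∈ s, Lagrange.nodalWeight s v i * (v i) ^ (#s - 1) = 1 := by
  have hcard : 0 < #s := Finset.card_pos.2 hs
  have hdeg : ((X : F[X]) ^ (#s - 1)).degree < #s := by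
    rw [degree_X_pow]
    exact_mod_cast Nat.sub_lt hcard one_pos
  have h := Lagrange.eq_interpolate hvs hdeg
  have h2 := congrArg (fun p => Polynomial.coeff p (#s - 1)) h
  simp only [Lagrange.interpolate_apply, Polynomial.finset_sum_coeff, coeff_X_pow,
    if_true, coeff_C_mul] at h2
  rw [h2]
  refine Finset.sum_congr rfl fun i hi => ?_
  have hb : (Lagrange.basis s v i).natDegree = #s - 1 := Lagrange.natDegree_basis hvs hi
  rw [eval_pow, eval_X, ← hb, Polynomial.coeff_natDegree, aux_leadingCoeff_basis,
    mul_comm]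

/-- For every integer `q ≥ 1`,
`∑_{k=1}^q 1/∏_{j=1, j≠k}^q (j²/k² − 1) = (−1)^(q+1)`. -/
theorem statement6 (q : ℕ) (hq : 1 ≤ q) :
    (∑ k ∈ Finset.Icc 1 q,
      (∏ j ∈ (Finset.Icc 1 q).erase k, ((j : ℝ) ^ 2 / (k : ℝ) ^ 2 - 1))⁻¹)
      = (-1 : ℝ) ^ (q + 1) := by
  set s : Finset ℕ := Finset.Icc 1 q with hs
  set v : ℕ → ℝ := fun k => (k : ℝ) ^ 2 with hv
  have hcard : #s = q := by simp [hs]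
  have hvs : Set.InjOn v s := by
    intro a _ b _ hab
    have h2 : (a:ℝ)^2 = (b:ℝ)^2 := hab
    have h3 : a^2 = b^2 := by exact_mod_cast h2
    exact Nat.pow_left_injective (by norm_num) h3
  have hsne : s.Nonempty := ⟨1, by simp [hs, hq]⟩
  have key := aux_sum_nodalWeight_pow s v hvs hsne
  rw [hcard] at key
  have main : (∑ k ∈ s, (∏ j ∈ s.erase k, ((j : ℝ) ^ 2 / (k : ℝ) ^ 2 - 1))⁻¹)
      = (-1 : ℝ) ^ (q - 1) * ∑ k ∈ s, Lagrange.nodalWeight s v k * (v k) ^ (q - 1) := by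
    rw [Finset.mul_sum]
    refine Finset.sum_congr rfl fun k hk => ?_
    have hk1 : 1 ≤ k := (Finset.mem_Icc.1 hk).1
    have hk0 : ((k : ℝ) ^ 2) ≠ 0 := by positivity
    have hce : #(s.erase k) = q - 1 := by rw [Finset.card_erase_of_mem hk, hcard]
    have hprod : (∏ j ∈ s.erase k, ((j : ℝ) ^ 2 / (k : ℝ) ^ 2 - 1))
        = (-1 : ℝ) ^ (q - 1) * (∏ j ∈ s.erase k, ((k:ℝ)^2 - (j:ℝ)^2)) * (((k:ℝ)^2)⁻¹) ^ (q-1) := by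
      have : ∀ j ∈ s.erase k, ((j : ℝ) ^ 2 / (k : ℝ) ^ 2 - 1)
          = (-1) * ((k:ℝ)^2 - (j:ℝ)^2) * ((k:ℝ)^2)⁻¹ := by
        intro j _
        rw [div_sub_one hk0, div_eq_mul_inv]
        ring
      rw [Finset.prod_congr rfl this, Finset.prod_mul_distrib, Finset.prod_mul_distrib,
        Finset.prod_const, Finset.prod_const, hce]
    have hnv : Lagrange.nodalWeight s v k = ∏ j ∈ s.erase k, ((k:ℝ)^2 - (j:ℝ)^2)⁻¹ := rfl
    have hvk : v k = (k:ℝ)^2 := rfl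
    rw [hprod, hnv, hvk]
    simp only [mul_inv, inv_pow, inv_inv, inv_neg, inv_one, ← Finset.prod_inv_distrib]
    ring_nf
    rw [inv_neg_one]
    ring
  calc (∑ k ∈ s, (∏ j ∈ s.erase k, ((j : ℝ) ^ 2 / (k : ℝ) ^ 2 - 1))⁻¹)
      = (-1 : ℝ) ^ (q - 1) * ∑ k ∈ s, Lagrange.nodalWeight s v k * (v k) ^ (q - 1) := main
    _ = (-1 : ℝ) ^ (q - 1) := by rw [key, mul_one]
    _ = (-1 : ℝ) ^ (q + 1) := by
        rw [show q + 1 = (q - 1) + 2 by omega, pow_add]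
        norm_num
end

section
/- Let K : ℝ → ℝ be a continuous, square-integrable function whose Fourier–Plancherel transform vanishes almost everywhere outside [−1/2, 1/2], and suppose that ∑_{j=1}^{∞} (|K(j)| + |K(−j)|)/j < ∞. Then for every u ∈ ℝ, the symmetric partial sums ∑_{j=−N}^{N} K(j) · sinc(π(u − j)) converge to K(u) as N → ∞; i.e., Shannon's sampling formula K(u) = ∑_{j=−∞}^{∞} K(j) sinc(π(u − j)) holds pointwise. -/
open MeasureTheory Real Filter

/-- The sinc function: `sinc u = sin u / u` for `u ≠ 0` and `sinc 0 = 1`. -/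
noncomputable def sinc (u : ℝ) : ℝ := if u = 0 then 1 else Real.sin u / u

lemma sinc_neg (x : ℝ) : _root_.sinc (-x) = _root_.sinc x := by
  unfold _root_.sinc
  rcases eq_or_ne x 0 with h | h
  · simp [h]
  · rw [if_neg (neg_ne_zero.mpr h), if_neg h, Real.sin_neg]; field_simp

lemma integral_exp_eq_sinc (a : ℝ) :
    ∫ x in (-(1/2) : ℝ)..(1/2 : ℝ), Complex.exp (2 * π * Complex.I * a * x)
      = (_root_.sinc (π * a) : ℂ) := by
  rcases eq_or_ne a 0 with ha | ha
  · simp [ha, _root_.sinc]; norm_num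
  · have hπ : (π:ℂ) ≠ 0 := Complex.ofReal_ne_zero.mpr Real.pi_ne_zero
    have ha' : (a:ℂ) ≠ 0 := Complex.ofReal_ne_zero.mpr ha
    have hc : (2 * (π:ℂ) * Complex.I * a) ≠ 0 :=
      mul_ne_zero (mul_ne_zero (mul_ne_zero two_ne_zero hπ) Complex.I_ne_zero) ha'
    rw [integral_exp_mul_complex hc]
    have h1 : (2 * (π:ℂ) * Complex.I * a) * ((1:ℝ)/2 : ℝ) = ((π:ℂ) * a) * Complex.I := by
      push_cast; ring
    have h2 : (2 * (π:ℂ) * Complex.I * a) * ((-(1/2):ℝ) : ℝ) = -(((π:ℂ) * a) * Complex.I) := by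
      push_cast; ring
    rw [h1, h2]
    have hsin : Complex.exp ((π:ℂ) * a * Complex.I) - Complex.exp (-((π:ℂ) * a * Complex.I))
        = 2 * Complex.I * Complex.sin ((π:ℂ) * a) := by
      rw [Complex.sin]; ring_nf; rw [Complex.I_sq]; ring
    rw [hsin]
    have : (_root_.sinc (π * a) : ℂ) = Complex.sin ((π:ℂ) * a) / ((π:ℂ) * a) := by
      rw [_root_.sinc, if_neg (mul_ne_zero Real.pi_ne_zero ha)]
      push_cast [Complex.ofReal_sin]
      ring
    rw [this]
    field_simp

/-- **pointwise Shannon sampling formula.** Let `K : ℝ → ℝ` be continuous and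
square-integrable, and suppose its Fourier–Plancherel transform vanishes a.e. outside
`[−1/2, 1/2]`; i.e. (equivalently, with the convention `G t = ∫ K u e^(2πitu) du` extended to
`L²` by Plancherel) there is a square-integrable `G : ℝ → ℂ` vanishing a.e. outside
`[−1/2, 1/2]` with `K u = ∫ G t e^(−2πitu) dt` for all `u`. If moreover
`∑_{j=1}^∞ (|K j| + |K (−j)|)/j < ∞`, then for every `u ∈ ℝ` the symmetric partial sums
`∑_{j=−N}^N K j · sinc (π(u − j))` converge to `K u`. -/
theorem statement8 (K : ℝ → ℝ) (hKcont : Continuous K) (hK2 : MemLp K 2 (volume : Measure ℝ))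
    (G : ℝ → ℂ) (hG2 : MemLp G 2 (volume : Measure ℝ))
    (hGsupp : ∀ᵐ t : ℝ, t ∉ Set.Icc (-(1/2) : ℝ) (1/2) → G t = 0)
    (hGK : ∀ u : ℝ, (K u : ℂ) = ∫ t : ℝ, G t * Complex.exp (-(2 * π * Complex.I * t * u)))
    (hsum : Summable fun j : ℕ =>
      (|K ((j : ℝ) + 1)| + |K (-((j : ℝ) + 1))|) / ((j : ℝ) + 1)) :
    ∀ u : ℝ,
      Tendsto (fun N : ℕ => ∑ j ∈ Finset.Icc (-(N : ℤ)) (N : ℤ),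
          K (j : ℝ) * _root_.sinc (π * (u - (j : ℝ))))
        atTop (nhds (K u)) := by
  intro u
  haveI : Fact ((0:ℝ) < 1) := ⟨one_pos⟩
  set a : ℝ := -(1/2) with ha_def
  -- strongly measurable representative of G
  set G' : ℝ → ℂ := hG2.1.mk G with hG'def
  have hG'sm : StronglyMeasurable G' := hG2.1.stronglyMeasurable_mk
  have hGG' : G =ᵐ[volume] G' := hG2.1.ae_eq_mk
  -- lifts to the circle
  set f : AddCircle (1:ℝ) → ℂ := AddCircle.liftIoc (1:ℝ) a G' with hfdef
  set e : AddCircle (1:ℝ) → ℂ :=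
    AddCircle.liftIoc (1:ℝ) a (fun x : ℝ => Complex.exp (2 * π * Complex.I * x * u)) with hedef
  have hfsm : StronglyMeasurable f :=
    hG'sm.comp_measurable
      (measurable_subtype_coe.comp (AddCircle.measurableEquivIoc (1:ℝ) a).measurable)
  have hesm : StronglyMeasurable e :=
    ((Complex.continuous_exp.comp (by continuity :
        Continuous fun x : ℝ => 2 * (π:ℂ) * Complex.I * x * u)).stronglyMeasurable).comp_measurable
      (measurable_subtype_coe.comp (AddCircle.measurableEquivIoc (1:ℝ) a).measurable)
  have hvol : (volume : Measure (AddCircle (1:ℝ))) = AddCircle.haarAddCircle := by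
    rw [AddCircle.volume_eq_smul_haarAddCircle]; simp
  have hmk := AddCircle.measurePreserving_mk (1:ℝ) a
  -- membership in L²
  have hf2 : MemLp f 2 (AddCircle.haarAddCircle) := by
    rw [← hvol, ← hmk.map_eq,
      memLp_map_measure_iff hfsm.aestronglyMeasurable AddCircle.measurable_mk'.aemeasurable]
    refine (hG2.restrict _).ae_eq ?_
    refine (ae_restrict_iff' measurableSet_Ioc).2 ?_
    filter_upwards [hGG'] with x hx hx2
    simp only [Function.comp_apply, hfdef]
    rw [AddCircle.liftIoc_coe_apply hx2, hx]
  have he2 : MemLp e 2 (AddCircle.haarAddCircle) := by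
    refine MemLp.of_bound hesm.aestronglyMeasurable 1 (Filter.Eventually.of_forall fun x => ?_)
    have : e x = Complex.exp (2 * π * Complex.I * (((AddCircle.equivIoc (1:ℝ) a) x : ℝ)) * u) := rfl
    rw [this, Complex.norm_exp]
    have : (2 * (π:ℂ) * Complex.I * (((AddCircle.equivIoc (1:ℝ) a) x : ℝ)) * u).re = 0 := by
      simp [Complex.ext_iff]; try ring
    rw [this, Real.exp_zero]
  set F := hf2.toLp f with hFdef
  set E := he2.toLp e with hEdef
  -- transfer of integrals from the circle to the interval
  have circInt : ∀ H : AddCircle (1:ℝ) → ℂ,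
      ∫ b, H b ∂AddCircle.haarAddCircle = ∫ x in Set.Ioc a (a + 1), H ↑x := by
    intro H
    rw [← hvol, AddCircle.integral_preimage (1:ℝ) a H]
  -- Fourier coefficients of f are the samples K j
  have hle : a ≤ a + 1 := by norm_num
  have hane : ∀ᵐ x : ℝ, x ≠ a := by
    refine measure_eq_zero_iff_ae_notMem.mp ?_
    exact Real.volume_singleton
  have hout : ∀ (v : ℝ), ∀ᵐ x : ℝ, x ∉ Set.Ioc a (a + 1) →
      G x * Complex.exp (-(2 * π * Complex.I * x * v)) = 0 := by
    intro v
    filter_upwards [hGsupp, hane] with x hx hxa hxIoc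
    have hnotIcc : x ∉ Set.Icc a (1/2 : ℝ) := by
      intro hmem
      apply hxIoc
      simp only [Set.mem_Icc] at hmem
      simp only [Set.mem_Ioc]
      refine ⟨lt_of_le_of_ne hmem.1 (Ne.symm hxa), ?_⟩
      have : a + 1 = (1/2 : ℝ) := by rw [ha_def]; norm_num
      rw [this]; exact hmem.2
    rw [hx hnotIcc, zero_mul]
  have hsetG : ∀ v : ℝ, ∫ x in Set.Ioc a (a+1), G x * Complex.exp (-(2*π*Complex.I*x*v))
      = (K v : ℂ) := by
    intro v
    rw [setIntegral_eq_integral_of_ae_compl_eq_zero (hout v)]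
    exact (hGK v).symm
  have hcoeff : ∀ n : ℤ, fourierCoeff f n = (K n : ℂ) := by
    intro n
    haveI : Fact ((0:ℝ) < a + 1 - a) := ⟨by norm_num⟩
    rw [hfdef, fourierCoeff_liftIoc_eq, fourierCoeffOn_eq_integral]
    have h1 : ∫ x in a..(a+1), fourier (-n) (x : AddCircle (a+1-a)) • G' x
        = ∫ x in a..(a+1), G x * Complex.exp (-(2*π*Complex.I*x*(n:ℝ))) := by
      refine intervalIntegral.integral_congr_ae ?_
      filter_upwards [hGG'] with x hx _
      rw [fourier_coe_apply, ← hx, smul_eq_mul, mul_comm]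
      congr 1
      push_cast
      ring
    rw [h1, intervalIntegral.integral_of_le hle, hsetG (n:ℝ)]
    norm_num
  have hcoeffF : ∀ n : ℤ, fourierCoeff (⇑F) n = fourierCoeff f n := by
    intro n
    have h : ∫ x : AddCircle (1:ℝ), fourier (-n) x • (⇑F) x ∂AddCircle.haarAddCircle
        = ∫ x : AddCircle (1:ℝ), fourier (-n) x • f x ∂AddCircle.haarAddCircle :=
      integral_congr_ae (by filter_upwards [hf2.coeFn_toLp] with x hx; rw [hx])
    simp only [fourierCoeff, h]
  -- inner products
  have hinner_F : (inner ℂ E F : ℂ) = (K u : ℂ) := by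
    have h0 : (inner ℂ E F : ℂ)
        = ∫ b, (starRingEnd ℂ) (e b) * f b ∂AddCircle.haarAddCircle := by
      rw [MeasureTheory.L2.inner_def]
      refine integral_congr_ae ?_
      filter_upwards [he2.coeFn_toLp, hf2.coeFn_toLp] with x hx1 hx2
      rw [RCLike.inner_apply, hx1, hx2, mul_comm]
    rw [h0, circInt, ← hsetG u]
    refine setIntegral_congr_ae measurableSet_Ioc ?_
    filter_upwards [hGG'] with x hx hmem
    rw [hedef, hfdef, AddCircle.liftIoc_coe_apply hmem, AddCircle.liftIoc_coe_apply hmem, ← hx,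
      ← Complex.exp_conj, mul_comm]
    congr 2
    simp only [map_mul, Complex.conj_I, Complex.conj_ofReal, map_ofNat]
    ring
  have hinner_basis : ∀ j : ℤ,
      (inner ℂ E (fourierLp 2 j) : ℂ) = (_root_.sinc (π * (u - j)) : ℂ) := by
    intro j
    have h0 : (inner ℂ E (fourierLp 2 j) : ℂ)
        = ∫ b, (starRingEnd ℂ) (e b) * fourier j b ∂AddCircle.haarAddCircle := by
      rw [MeasureTheory.L2.inner_def]
      refine integral_congr_ae ?_
      filter_upwards [he2.coeFn_toLp, coeFn_fourierLp 2 j] with x hx1 hx2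
      rw [RCLike.inner_apply, hx1, hx2, mul_comm]
    rw [h0, circInt]
    have h1 : ∫ x in Set.Ioc a (a+1), (starRingEnd ℂ) (e ↑x) * fourier j (↑x : AddCircle (1:ℝ))
        = ∫ x in Set.Ioc a (a+1), Complex.exp (2*π*Complex.I*((j:ℝ)-u)*x) := by
      refine setIntegral_congr_fun measurableSet_Ioc fun x hx => ?_
      rw [hedef, AddCircle.liftIoc_coe_apply hx, fourier_coe_apply, ← Complex.exp_conj,
        ← Complex.exp_add]
      congr 1
      simp only [map_mul, Complex.conj_I, Complex.conj_ofReal, map_ofNat]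
      push_cast
      ring
    rw [h1, ← intervalIntegral.integral_of_le hle]
    have ha2 : a + 1 = (1/2 : ℝ) := by rw [ha_def]; norm_num
    rw [ha2, ha_def]
    have hkey := integral_exp_eq_sinc ((j:ℝ) - u)
    push_cast at hkey ⊢
    rw [hkey, show π * ((j:ℝ) - u) = -(π * (u - (j:ℝ))) by ring, _root_.sinc_neg]
  -- L² convergence of the Fourier series, paired with E
  have hS := (innerSL ℂ E).hasSum (hasSum_fourier_series_L2 F)
  simp only [innerSL_apply_apply, inner_smul_right, hcoeffF, hcoeff, hinner_basis, hinner_F] at hS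
  have hSre := Complex.reCLM.hasSum hS
  simp only [Complex.reCLM_apply, ← Complex.ofReal_mul, Complex.ofReal_re] at hSre
  refine hSre.comp (tendsto_atTop_finset_of_monotone ?_ ?_)
  · intro m n hmn
    apply Finset.Icc_subset_Icc <;> omega
  · intro x
    exact ⟨x.natAbs, by
      simp only [Finset.mem_Icc, Int.natCast_natAbs]
      exact ⟨neg_abs_le x, le_abs_self x⟩⟩
end

section
/- Let p ≥ 1 be an integer and let G : ℝ → ℝ be p times continuously differentiable with G(0) = 1, G^{(j)}(0) = 0 for j = 1, …, p−1, and sup_{x ∈ ℝ} |G^{(p)}(x)| < ∞. Let φ : ℝ → ℂ be measurable with |φ(t)| ≤ 1 for all t and ∫_{−∞}^{∞} t^{2p} |φ(t)|² dt < ∞. Then lim_{h → 0⁺} h^{−2p} ∫_{−∞}^{∞} (G(ht) − 1)² |φ(t)|² dt = (G^{(p)}(0)/p!)² ∫_{−∞}^{∞} t^{2p} |φ(t)|² dt. -/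
open MeasureTheory Real Filter

private lemma iterW {f : ℝ → ℝ} {N : ℕ} (hf : ContDiff ℝ (N : ℕ∞) f) {s : Set ℝ}
    (hs : UniqueDiffOn ℝ s) {x : ℝ} (hx : x ∈ s) {m : ℕ} (hm : m ≤ N) :
    iteratedDerivWithin m f s x = iteratedDeriv m f x := by
  have h : HasFTaylorSeriesUpTo (N : ℕ∞) f (ftaylorSeries ℝ f) :=
    contDiff_iff_ftaylorSeries.mp (by exact_mod_cast hf)
  have h2 : HasFTaylorSeriesUpToOn (N : ℕ∞) f (ftaylorSeries ℝ f) s :=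
    (hasFTaylorSeriesUpToOn_univ_iff.mpr h).mono (Set.subset_univ s)
  have h3 := h2.eq_iteratedFDerivWithin_of_uniqueDiffOn (m := m) (by exact_mod_cast hm) hs hx
  rw [iteratedDerivWithin_eq_iteratedFDerivWithin, iteratedDeriv_eq_iteratedFDeriv, ← h3]
  rfl

private lemma taylor_pos {p : ℕ} (hp : 1 ≤ p) {G : ℝ → ℝ} (hG : ContDiff ℝ (p : ℕ∞) G)
    (hG0 : G 0 = 1) (hGj : ∀ j : ℕ, 1 ≤ j → j ≤ p - 1 → iteratedDeriv j G 0 = 0)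
    {x : ℝ} (hx : 0 < x) :
    ∃ ξ ∈ Set.Ioo 0 x, G x - 1 = iteratedDeriv p G ξ * x ^ p / p.factorial := by
  obtain ⟨n, rfl⟩ : ∃ n, p = n + 1 := ⟨p - 1, (Nat.succ_pred_eq_of_pos hp).symm⟩
  have husub : UniqueDiffOn ℝ (Set.Icc 0 x) := uniqueDiffOn_Icc hx
  have hconOn : ContDiffOn ℝ ((n + 1 : ℕ) : ℕ∞) G (Set.Icc 0 x) := hG.contDiffOn
  have hf : ContDiffOn ℝ (n : ℕ∞) G (Set.Icc 0 x) := hconOn.of_le (by exact_mod_cast n.le_succ)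
  have hf' : DifferentiableOn ℝ (iteratedDerivWithin n G (Set.Icc 0 x)) (Set.Ioo 0 x) :=
    (hconOn.differentiableOn_iteratedDerivWithin (by exact_mod_cast n.lt_succ_self) husub).mono
      Set.Ioo_subset_Icc_self
  obtain ⟨ξ, hξ, hEq⟩ := taylor_mean_remainder_lagrange (x₀ := 0) hx.ne
    (by rw [Set.uIcc_of_le hx.le]; exact hf)
    (by rw [Set.uIcc_of_le hx.le, Set.uIoo_of_le hx.le]; exact hf')
  rw [Set.uIoo_of_le hx.le] at hξ
  rw [Set.uIcc_of_le hx.le] at hEq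
  refine ⟨ξ, hξ, ?_⟩
  have hT : taylorWithinEval G n (Set.Icc 0 x) 0 x = 1 := by
    rw [taylor_within_apply]
    rw [Finset.sum_eq_single 0]
    · have h0 : iteratedDerivWithin 0 G (Set.Icc 0 x) 0 = 1 := by
        rw [iterW hG husub (Set.left_mem_Icc.mpr hx.le) (Nat.zero_le _)]
        simpa using hG0
      simp [h0]
    · intro k hk hk0
      have hk1 : 1 ≤ k := Nat.one_le_iff_ne_zero.mpr hk0
      have hk2 : k ≤ n := by
        have := Finset.mem_range.mp hk; omega
      rw [iterW hG husub (Set.left_mem_Icc.mpr hx.le) (by omega : k ≤ n + 1)]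
      rw [hGj k hk1 (by omega)]
      simp
    · intro h; simp at h
  rw [hT] at hEq
  rw [hEq, iterW hG husub (Set.Ioo_subset_Icc_self hξ) le_rfl]
  simp

private lemma taylor_key {p : ℕ} (hp : 1 ≤ p) {G : ℝ → ℝ} (hG : ContDiff ℝ (p : ℕ∞) G)
    (hG0 : G 0 = 1) (hGj : ∀ j : ℕ, 1 ≤ j → j ≤ p - 1 → iteratedDeriv j G 0 = 0)
    {x : ℝ} (hx : x ≠ 0) :
    ∃ ξ : ℝ, |ξ| < |x| ∧ G x - 1 = iteratedDeriv p G ξ * x ^ p / p.factorial := by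
  rcases hx.lt_or_gt with hneg | hpos
  · -- x < 0 : apply the positive case to H y = G (-y)
    set H : ℝ → ℝ := fun y => G (-y) with hH
    have hHsmooth : ContDiff ℝ (p : ℕ∞) H := hG.comp contDiff_neg
    have hH0 : H 0 = 1 := by simp [hH, hG0]
    have hHj : ∀ j : ℕ, 1 ≤ j → j ≤ p - 1 → iteratedDeriv j H 0 = 0 := by
      intro j hj1 hj2
      rw [hH, iteratedDeriv_comp_neg, neg_zero, hGj j hj1 hj2, smul_zero]
    obtain ⟨ξ, hξ, hEq⟩ := taylor_pos hp hHsmooth hH0 hHj (x := -x) (by linarith)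
    refine ⟨-ξ, ?_, ?_⟩
    · rw [abs_neg, abs_of_pos hξ.1, abs_of_neg hneg]; linarith [hξ.2]
    · have h1 : H (-x) = G x := by simp [hH]
      have h2 : iteratedDeriv p H ξ = (-1 : ℝ) ^ p * iteratedDeriv p G (-ξ) := by
        rw [hH, iteratedDeriv_comp_neg]; simp [smul_eq_mul]
      rw [h1, h2] at hEq
      have h3 : (-1 : ℝ) ^ p * iteratedDeriv p G (-ξ) * (-x) ^ p =
          iteratedDeriv p G (-ξ) * x ^ p := by
        rw [mul_comm ((-1 : ℝ) ^ p), mul_assoc, ← mul_pow]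
        norm_num
      rw [hEq, h3]
  · obtain ⟨ξ, hξ, hEq⟩ := taylor_pos hp hG hG0 hGj hpos
    exact ⟨ξ, by rw [abs_of_pos hξ.1, abs_of_pos hpos]; exact hξ.2, hEq⟩

private lemma bound_key {p : ℕ} (hp : 1 ≤ p) {G : ℝ → ℝ} (hG : ContDiff ℝ (p : ℕ∞) G)
    (hG0 : G 0 = 1) (hGj : ∀ j : ℕ, 1 ≤ j → j ≤ p - 1 → iteratedDeriv j G 0 = 0)
    {M : ℝ} (hM : ∀ x : ℝ, |iteratedDeriv p G x| ≤ M) (x : ℝ) :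
    |G x - 1| ≤ M * |x| ^ p / p.factorial := by
  rcases eq_or_ne x 0 with rfl | hx
  · simp [hG0, zero_pow (by omega : p ≠ 0)]
  · obtain ⟨ξ, _, hEq⟩ := taylor_key hp hG hG0 hGj hx
    rw [hEq, abs_div, abs_mul, abs_pow, Nat.abs_cast]
    apply div_le_div_of_nonneg_right ?_ (by positivity)
    exact mul_le_mul_of_nonneg_right (hM ξ) (by positivity)

private lemma lim_key {p : ℕ} (hp : 1 ≤ p) {G : ℝ → ℝ} (hG : ContDiff ℝ (p : ℕ∞) G)
    (hG0 : G 0 = 1) (hGj : ∀ j : ℕ, 1 ≤ j → j ≤ p - 1 → iteratedDeriv j G 0 = 0) :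
    Tendsto (fun x : ℝ => (G x - 1) / x ^ p) (nhdsWithin 0 {(0 : ℝ)}ᶜ)
      (nhds (iteratedDeriv p G 0 / p.factorial)) := by
  have hcont : Continuous (iteratedDeriv p G) := hG.continuous_iteratedDeriv p (le_refl _)
  rw [Metric.tendsto_nhdsWithin_nhds]
  intro ε hε
  have hfac : (0 : ℝ) < p.factorial := by positivity
  have hca : ContinuousAt (iteratedDeriv p G) 0 := hcont.continuousAt
  rw [Metric.continuousAt_iff] at hca
  obtain ⟨δ, hδ, hδh⟩ := hca (ε * p.factorial) (by positivity)
  refine ⟨δ, hδ, ?_⟩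
  intro x hx hxd
  obtain ⟨ξ, hξ, hEq⟩ := taylor_key hp hG hG0 hGj hx
  have hxp : x ^ p ≠ 0 := pow_ne_zero _ hx
  have h1 : (G x - 1) / x ^ p = iteratedDeriv p G ξ / p.factorial := by
    rw [hEq]; field_simp
  rw [h1]
  have hξd : dist ξ 0 < δ := by
    rw [Real.dist_eq, sub_zero]
    calc |ξ| < |x| := hξ
    _ < δ := by rwa [Real.dist_eq, sub_zero] at hxd
  have := hδh hξd
  rw [Real.dist_eq] at this ⊢
  rw [div_sub_div_same, abs_div, Nat.abs_cast]
  rw [div_lt_iff₀ hfac]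
  exact this

/-- Let `p ≥ 1`, let `G : ℝ → ℝ` be `p` times continuously differentiable
with `G 0 = 1`, `G⁽ʲ⁾(0) = 0` for `j = 1, …, p−1`, and `sup_x |G⁽ᵖ⁾(x)| < ∞`. Let
`φ : ℝ → ℂ` be measurable with `|φ t| ≤ 1` and `∫ t^(2p) |φ t|² dt < ∞`. Then
`h^(−2p) ∫ (G(ht) − 1)² |φ t|² dt → (G⁽ᵖ⁾(0)/p!)² ∫ t^(2p) |φ t|² dt` as `h → 0⁺`. -/
theorem statement11 (p : ℕ) (hp : 1 ≤ p) (G : ℝ → ℝ)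
    (hGsmooth : ContDiff ℝ p G) (hG0 : G 0 = 1)
    (hGj : ∀ j : ℕ, 1 ≤ j → j ≤ p - 1 → iteratedDeriv j G 0 = 0)
    (hGbd : ∃ M : ℝ, ∀ x : ℝ, |iteratedDeriv p G x| ≤ M)
    (φ : ℝ → ℂ) (hφmeas : Measurable φ) (hφbd : ∀ t, ‖φ t‖ ≤ 1)
    (hφint : Integrable (fun t : ℝ => t ^ (2 * p) * ‖φ t‖ ^ 2)) :
    Tendsto
      (fun h : ℝ => (h ^ (2 * p))⁻¹ * ∫ t : ℝ, (G (h * t) - 1) ^ 2 * ‖φ t‖ ^ 2)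
      (nhdsWithin 0 (Set.Ioi 0))
      (nhds ((iteratedDeriv p G 0 / (p.factorial : ℝ)) ^ 2 *
        ∫ t : ℝ, t ^ (2 * p) * ‖φ t‖ ^ 2)) := by
  obtain ⟨M, hM⟩ := hGbd
  have hG : ContDiff ℝ (p : ℕ∞) G := by exact_mod_cast hGsmooth
  set c : ℝ := iteratedDeriv p G 0 / (p.factorial : ℝ) with hc
  have hGcont : Continuous G := hG.continuous
  have hfacpos : (0 : ℝ) < p.factorial := by positivity
  -- rewrite both sides as integrals of pointwise products
  have hrw1 : ∀ h : ℝ,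
      (h ^ (2 * p))⁻¹ * ∫ t : ℝ, (G (h * t) - 1) ^ 2 * ‖φ t‖ ^ 2 =
      ∫ t : ℝ, (h ^ (2 * p))⁻¹ * ((G (h * t) - 1) ^ 2 * ‖φ t‖ ^ 2) :=
    fun h => (integral_const_mul _ _).symm
  have hrw2 : c ^ 2 * (∫ t : ℝ, t ^ (2 * p) * ‖φ t‖ ^ 2) =
      ∫ t : ℝ, c ^ 2 * (t ^ (2 * p) * ‖φ t‖ ^ 2) :=
    (integral_const_mul _ _).symm
  simp only [hrw1, hrw2]
  -- dominated convergence
  apply tendsto_integral_filter_of_dominated_convergence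
    (fun t : ℝ => (M / p.factorial) ^ 2 * (t ^ (2 * p) * ‖φ t‖ ^ 2))
  · -- measurability
    filter_upwards with h
    have h1 : Measurable fun t : ℝ => (G (h * t) - 1) ^ 2 :=
      (((hGcont.comp (continuous_const.mul continuous_id)).sub continuous_const).pow 2).measurable
    have h2 : Measurable fun t : ℝ => ‖φ t‖ ^ 2 :=
      ((continuous_norm.measurable.comp hφmeas).pow_const 2)
    exact (measurable_const.mul (h1.mul h2)).aestronglyMeasurable
  · -- uniform bound
    filter_upwards [self_mem_nhdsWithin] with h hh
    apply ae_of_all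
    intro t
    have hhpos : 0 < h := hh
    have hh2p : 0 < h ^ (2 * p) := by positivity
    have hGb : |G (h * t) - 1| ≤ M * |h * t| ^ p / p.factorial :=
      bound_key hp hG hG0 hGj hM (h * t)
    have hsq : (G (h * t) - 1) ^ 2 ≤ (M * |h * t| ^ p / p.factorial) ^ 2 := by
      rw [← sq_abs]
      exact pow_le_pow_left₀ (abs_nonneg _) hGb 2
    have habs : |h * t| ^ (2 * p) = (h * t) ^ (2 * p) := by
      rw [pow_mul, pow_mul, sq_abs]
    have hfx : (M * |h * t| ^ p / p.factorial) ^ 2 =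
        (M / p.factorial) ^ 2 * (h ^ (2 * p) * t ^ (2 * p)) := by
      rw [div_pow, mul_pow, ← pow_mul, mul_comm 2 p, mul_comm p 2, habs, mul_pow]
      ring
    have hnn : 0 ≤ (h ^ (2 * p))⁻¹ * ((G (h * t) - 1) ^ 2 * ‖φ t‖ ^ 2) := by
      positivity
    rw [Real.norm_eq_abs, abs_of_nonneg hnn]
    have hsq' : (G (h * t) - 1) ^ 2 ≤ (M / p.factorial) ^ 2 * (h ^ (2 * p) * t ^ (2 * p)) :=
      hfx ▸ hsq
    calc (h ^ (2 * p))⁻¹ * ((G (h * t) - 1) ^ 2 * ‖φ t‖ ^ 2)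
        ≤ (h ^ (2 * p))⁻¹ *
          ((M / p.factorial) ^ 2 * (h ^ (2 * p) * t ^ (2 * p)) * ‖φ t‖ ^ 2) := by
          refine mul_le_mul_of_nonneg_left ?_ (by positivity)
          exact mul_le_mul_of_nonneg_right hsq' (by positivity)
      _ = (M / p.factorial) ^ 2 * (t ^ (2 * p) * ‖φ t‖ ^ 2) := by
          field_simp
  · exact hφint.const_mul _
  · -- pointwise limit
    apply ae_of_all
    intro t
    rcases eq_or_ne t 0 with rfl | ht
    · have hz : ∀ h : ℝ,
          (h ^ (2 * p))⁻¹ * ((G (h * 0) - 1) ^ 2 * ‖φ 0‖ ^ 2) = 0 := by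
        intro h; simp [hG0]
      simp only [hz]
      have : c ^ 2 * ((0 : ℝ) ^ (2 * p) * ‖φ 0‖ ^ 2) = 0 := by
        rw [zero_pow (by omega : 2 * p ≠ 0)]; ring
      rw [this]
      exact tendsto_const_nhds
    · have hmap : Tendsto (fun h : ℝ => h * t) (nhdsWithin 0 (Set.Ioi 0))
          (nhdsWithin 0 {(0 : ℝ)}ᶜ) := by
        apply tendsto_nhdsWithin_of_tendsto_nhds_of_eventually_within
        · have : Tendsto (fun h : ℝ => h * t) (nhds 0) (nhds (0 * t)) :=
            (continuous_id.mul continuous_const).tendsto 0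
          simpa using this.mono_left nhdsWithin_le_nhds
        · filter_upwards [self_mem_nhdsWithin] with h hh
          exact mul_ne_zero (ne_of_gt hh) ht
      have hQ : Tendsto (fun h : ℝ => (G (h * t) - 1) / (h * t) ^ p)
          (nhdsWithin 0 (Set.Ioi 0)) (nhds c) :=
        (lim_key hp hG hG0 hGj).comp hmap
      have hQ2 : Tendsto
          (fun h : ℝ => ((G (h * t) - 1) / (h * t) ^ p) ^ 2 *
            (t ^ (2 * p) * ‖φ t‖ ^ 2))
          (nhdsWithin 0 (Set.Ioi 0))
          (nhds (c ^ 2 * (t ^ (2 * p) * ‖φ t‖ ^ 2))) :=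
        (hQ.pow 2).mul_const _
      apply hQ2.congr'
      filter_upwards [self_mem_nhdsWithin] with h hh
      have hh0 : h ≠ 0 := ne_of_gt hh
      have hht : (h * t) ^ p ≠ 0 := pow_ne_zero _ (mul_ne_zero hh0 ht)
      rw [div_pow, ← pow_mul, mul_comm p 2, mul_pow]
      field_simp
end
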